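/- Let c > 0 and r ≥ 0 be integers. In the field ℚ(v, K), one has [K;−c,r]_v = ∑_{s=0}^{r} (−1)^s v^{c(r−s)} [c+s−1 choose s]_v K^s [K;0,r−s]_v. -/

import Mathlib

/-- The field `ℚ(v, K)` of rational functions in two variables, realized as `ℚ(v)(K)`. -/
noncomputable abbrev F2 : Type := RatFunc (RatFunc ℚ)

/-- The variable `v` of `ℚ(v, K)`. -/
noncomputable def vv : F2 := RatFunc.C RatFunc.X

/-- The variable `K` of `ℚ(v, K)`. -/
noncomputable def KK : F2 := RatFunc.X

/-- `[K;c,t]_v = ∏_{s=1}^{t} (K v^{c−s+1} − K^{−1} v^{−c+s−1})/(v^s − v^{−s})`. -/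
noncomputable def Kbr (c : ℤ) (t : ℕ) : F2 :=
  ∏ s ∈ Finset.range t,
    (KK * vv ^ (c - (s : ℤ)) - KK⁻¹ * vv ^ (-c + (s : ℤ))) /
      (vv ^ ((s : ℤ) + 1) - vv ^ (-(s : ℤ) - 1))

/-- The balanced quantum number `[c]_v = (v^c − v^{−c})/(v − v^{−1})` for `c ∈ ℤ`. -/
noncomputable def qintF (c : ℤ) : F2 := (vv ^ c - vv ^ (-c)) / (vv - vv⁻¹)

/-- The balanced quantum factorial `[m]!_v`. -/
noncomputable def qfactF (m : ℕ) : F2 := ∏ k ∈ Finset.range m, qintF ((k : ℤ) + 1)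

/-- `[c choose m]_v = [c]_v[c−1]_v⋯[c−m+1]_v/[m]!_v` for `c ∈ ℤ`, `m ∈ ℕ`. -/
noncomputable def qbinomF (c : ℤ) (m : ℕ) : F2 :=
  (∏ k ∈ Finset.range m, qintF (c - (k : ℤ))) / qfactF m

lemma hv : vv ≠ 0 := by simp [vv, RatFunc.X_ne_zero]

lemma vpow_ne_one (n : ℕ) (hn : 0 < n) : vv ^ n ≠ 1 := by
  intro h
  rw [vv, ← map_pow, ← map_one RatFunc.C] at h
  have h2 := (RatFunc.C (K := RatFunc ℚ)).injective h
  rw [← RatFunc.algebraMap_X (K := ℚ), ← map_pow,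
    ← map_one (algebraMap (Polynomial ℚ) (RatFunc ℚ))] at h2
  have h3 := IsFractionRing.injective (Polynomial ℚ) (RatFunc ℚ) h2
  have h4 := Polynomial.natDegree_X_pow (R := ℚ) n
  rw [h3] at h4
  simp at h4
  omega

lemma vzpow_sub_ne (m : ℕ) (hm : 0 < m) : vv ^ (m : ℤ) - vv ^ (-(m : ℤ)) ≠ 0 := by
  intro h
  have h1 : vv ^ (m : ℤ) = vv ^ (-(m : ℤ)) := by linear_combination h
  have h2 : vv ^ (m : ℤ) * vv ^ (m : ℤ) = vv ^ (-(m : ℤ)) * vv ^ (m : ℤ) := by rw [h1]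
  rw [← zpow_add₀ hv, ← zpow_add₀ hv] at h2
  simp only [neg_add_cancel, zpow_zero] at h2
  have : ((m : ℤ) + (m : ℤ)) = ((2 * m : ℕ) : ℤ) := by push_cast; ring
  rw [this, zpow_natCast] at h2
  exact vpow_ne_one (2 * m) (by omega) h2

lemma hvd : vv - vv⁻¹ ≠ 0 := by
  have := vzpow_sub_ne 1 one_pos
  simpa [zpow_one] using this

lemma qint_ne (m : ℕ) : qintF ((m : ℤ) + 1) ≠ 0 := by
  rw [qintF]
  apply div_ne_zero _ hvd
  have := vzpow_sub_ne (m + 1) (by omega)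
  have hc : ((m + 1 : ℕ) : ℤ) = (m : ℤ) + 1 := by push_cast; ring
  rw [hc] at this
  exact this

lemma qfact_ne (m : ℕ) : qfactF m ≠ 0 := by
  rw [qfactF]
  exact Finset.prod_ne_zero_iff.mpr fun k _ => qint_ne k

lemma qint_id (n : ℤ) (u : ℕ) :
    qintF n = vv ^ ((u:ℤ)+1) * qintF (n-1-(u:ℤ)) + vv ^ ((u:ℤ)+1-n) * qintF ((u:ℤ)+1) := by
  rw [qintF, qintF, qintF, ← mul_div_assoc, ← mul_div_assoc, ← add_div]
  congr 1
  simp only [mul_sub, sub_mul, mul_add]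
  simp only [mul_assoc, mul_comm, mul_left_comm, ← zpow_add₀ hv]
  ring_nf

lemma pascal (n : ℤ) (u : ℕ) :
    qbinomF n (u+1) = vv ^ ((u:ℤ)+1) * qbinomF (n-1) (u+1)
      + vv ^ ((u:ℤ)+1-n) * qbinomF (n-1) u := by
  rw [qbinomF, qbinomF, qbinomF]
  have hfact : qfactF (u+1) = qfactF u * qintF ((u:ℤ)+1) := by
    rw [qfactF, qfactF, Finset.prod_range_succ]
  have h1 : ∏ k ∈ Finset.range (u+1), qintF (n - (k:ℤ))
      = qintF n * ∏ k ∈ Finset.range u, qintF (n - 1 - (k:ℤ)) := by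
    rw [Finset.prod_range_succ']
    have ep : (∏ x ∈ Finset.range u, qintF (n - ((x+1 : ℕ) : ℤ)))
        = ∏ x ∈ Finset.range u, qintF (n - 1 - (x:ℤ)) :=
      Finset.prod_congr rfl fun k _ => by congr 1; push_cast; ring
    have e0 : qintF (n - ((0:ℕ):ℤ)) = qintF n := by norm_num
    rw [ep, e0, mul_comm]
  have h2 : ∏ k ∈ Finset.range (u+1), qintF (n - 1 - (k:ℤ))
      = (∏ k ∈ Finset.range u, qintF (n - 1 - (k:ℤ))) * qintF (n-1-(u:ℤ)) :=
    Finset.prod_range_succ _ _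
  rw [h1, h2, hfact]
  rw [show (∏ k ∈ Finset.range u, qintF (n - 1 - (k:ℤ))) / qfactF u
      = (∏ k ∈ Finset.range u, qintF (n - 1 - (k:ℤ))) * qintF ((u:ℤ)+1)
          / (qfactF u * qintF ((u:ℤ)+1))
      from (mul_div_mul_right _ _ (qint_ne u)).symm]
  rw [← mul_div_assoc, ← mul_div_assoc, ← add_div]
  congr 1
  linear_combination (∏ k ∈ Finset.range u, qintF (n - 1 - (k:ℤ))) * qint_id n u

noncomputable def Pf (c : ℤ) (s : ℤ) : F2 := KK * vv ^ (c - s) - KK⁻¹ * vv ^ (-c + s)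
noncomputable def Df (s : ℤ) : F2 := vv ^ (s + 1) - vv ^ (-s - 1)

lemma hD (s : ℕ) : Df (s : ℤ) ≠ 0 := by
  rw [Df]
  have := vzpow_sub_ne (s + 1) (by omega)
  have hc : ((s + 1 : ℕ) : ℤ) = (s : ℤ) + 1 := by push_cast; ring
  rw [hc] at this
  rw [show (-(s:ℤ) - 1) = -((s:ℤ)+1) by ring]
  exact this

lemma Kbr_eq (c : ℤ) (t : ℕ) :
    Kbr c t = (∏ s ∈ Finset.range t, Pf c (s:ℤ)) / ∏ s ∈ Finset.range t, Df (s:ℤ) := by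
  rw [Kbr, ← Finset.prod_div_distrib]
  rfl

lemma Kbr_succ (c : ℤ) (t : ℕ) :
    Kbr c (t+1) = Kbr c t * (Pf c (t:ℤ) / Df (t:ℤ)) :=
  Finset.prod_range_succ _ _

lemma Kbr_shift (c : ℤ) (t : ℕ) :
    Kbr (c-1) t * Pf c 0 = Kbr c t * Pf c (t:ℤ) := by
  rw [Kbr_eq, Kbr_eq, div_mul_eq_mul_div, div_mul_eq_mul_div]
  congr 1
  have ep : (∏ s ∈ Finset.range t, Pf (c-1) (s:ℤ))
      = ∏ s ∈ Finset.range t, Pf c ((s:ℤ)+1) :=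
    Finset.prod_congr rfl fun s _ => by
      rw [Pf, Pf, show c - 1 - (s:ℤ) = c - ((s:ℤ)+1) by ring,
        show -(c-1) + (s:ℤ) = -c + ((s:ℤ)+1) by ring]
  rw [ep]
  have h1 : ∏ s ∈ Finset.range (t+1), Pf c (s:ℤ)
      = (∏ s ∈ Finset.range t, Pf c ((s:ℤ)+1)) * Pf c 0 := by
    rw [Finset.prod_range_succ']
    congr 1
  have h2 : ∏ s ∈ Finset.range (t+1), Pf c (s:ℤ)
      = (∏ s ∈ Finset.range t, Pf c (s:ℤ)) * Pf c (t:ℤ) := Finset.prod_range_succ _ _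
  rw [← h1, h2]

lemma Kbr_step (c : ℤ) (m : ℕ) :
    Kbr (c-1) (m+1) + vv ^ c * KK * Kbr (c-1) m = vv ^ ((m:ℤ)+1) * Kbr c (m+1) := by
  have key : Pf (c-1) (m:ℤ) + vv ^ c * KK * Df (m:ℤ) = vv ^ ((m:ℤ)+1) * Pf c 0 := by
    rw [Pf, Pf, Df]
    simp only [mul_sub, sub_mul, mul_add]
    simp only [mul_assoc, mul_comm, mul_left_comm, ← zpow_add₀ hv]
    ring_nf
  rw [Kbr_succ, Kbr_succ]
  rw [← mul_div_assoc, ← mul_div_assoc, div_add' _ _ _ (hD m), ← mul_div_assoc]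
  congr 1
  linear_combination Kbr (c-1) m * key + vv ^ ((m:ℤ)+1) * Kbr_shift c m

lemma termwise (c m t : ℕ) :
    vv ^ ((m:ℤ)+1) * ((-1:F2)^(t+1) * vv ^ ((c:ℤ)*(((m:ℤ)+1)-((t:ℤ)+1)))
        * qbinomF ((c:ℤ)+((t:ℤ)+1)-1) (t+1) * KK^(t+1) * Kbr 0 (m-t))
    - vv ^ (-(c:ℤ)) * KK * ((-1:F2)^t * vv ^ (((c:ℤ)+1)*((m:ℤ)-(t:ℤ)))
        * qbinomF (((c:ℤ)+1)+(t:ℤ)-1) t * KK^t * Kbr 0 (m-t))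
    = (-1:F2)^(t+1) * vv ^ (((c:ℤ)+1)*(((m:ℤ)+1)-((t:ℤ)+1)))
        * qbinomF (((c:ℤ)+1)+((t:ℤ)+1)-1) (t+1) * KK^(t+1) * Kbr 0 (m-t) := by
  rw [show ((c:ℤ)+1)+((t:ℤ)+1)-1 = (c:ℤ)+(t:ℤ)+1 by ring]
  rw [pascal ((c:ℤ)+(t:ℤ)+1) t]
  rw [show (c:ℤ)+(t:ℤ)+1-1 = (c:ℤ)+(t:ℤ) by ring]
  rw [show (c:ℤ)+((t:ℤ)+1)-1 = (c:ℤ)+(t:ℤ) by ring]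
  rw [show ((c:ℤ)+1)+(t:ℤ)-1 = (c:ℤ)+(t:ℤ) by ring]
  have h1 : vv ^ ((m:ℤ)+1) * vv ^ ((c:ℤ)*(((m:ℤ)+1)-((t:ℤ)+1)))
      = vv ^ (((c:ℤ)+1)*(((m:ℤ)+1)-((t:ℤ)+1))) * vv ^ ((t:ℤ)+1) := by
    rw [← zpow_add₀ hv, ← zpow_add₀ hv]; congr 1; ring
  have h2 : vv ^ (-(c:ℤ)) * vv ^ (((c:ℤ)+1)*((m:ℤ)-(t:ℤ)))
      = vv ^ (((c:ℤ)+1)*(((m:ℤ)+1)-((t:ℤ)+1))) * vv ^ ((t:ℤ)+1-((c:ℤ)+(t:ℤ)+1)) := by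
    rw [← zpow_add₀ hv, ← zpow_add₀ hv]; congr 1; ring
  linear_combination ((-1:F2)^(t+1) * qbinomF ((c:ℤ)+(t:ℤ)) (t+1) * KK^(t+1) * Kbr 0 (m-t)) * h1
    - (KK * (-1:F2)^t * qbinomF ((c:ℤ)+(t:ℤ)) t * KK^t * Kbr 0 (m-t)) * h2

lemma qbinom_zero (n : ℤ) : qbinomF n 0 = 1 := by simp [qbinomF, qfactF]

lemma qint_zero : qintF 0 = 0 := by simp [qintF]

lemma qbinom_diag (k : ℕ) : qbinomF (k:ℤ) (k+1) = 0 := by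
  rw [qbinomF]
  rw [Finset.prod_eq_zero (Finset.self_mem_range_succ k)]
  · simp
  · simp [qint_zero]

lemma main (c : ℕ) : ∀ r : ℕ, Kbr (-(c:ℤ)) r = ∑ s ∈ Finset.range (r+1),
    (-1:F2)^s * vv ^ ((c:ℤ)*((r:ℤ)-(s:ℤ))) * qbinomF ((c:ℤ)+(s:ℤ)-1) s * KK^s * Kbr 0 (r-s) := by
  induction c with
  | zero =>
    intro r
    rw [show (-((0:ℕ):ℤ)) = 0 by norm_num]
    symm
    rw [Finset.sum_eq_single 0]
    · simp [qbinom_zero]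
    · intro b _ hb
      obtain ⟨k, rfl⟩ := Nat.exists_eq_succ_of_ne_zero hb
      rw [show ((0:ℕ):ℤ) + ((k+1:ℕ):ℤ) - 1 = (k:ℤ) by push_cast; ring, qbinom_diag]
      ring
    · intro h
      simp at h
  | succ c ih =>
    have hmain : ∀ r : ℕ, Kbr (-(c:ℤ)-1) r = ∑ s ∈ Finset.range (r+1),
        (-1:F2)^s * vv ^ (((c:ℤ)+1)*((r:ℤ)-(s:ℤ))) * qbinomF ((c:ℤ)+1+(s:ℤ)-1) s
          * KK^s * Kbr 0 (r-s) := by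
      intro r
      induction r with
      | zero => simp [Kbr, qbinom_zero]
      | succ m ihr =>
        rw [eq_sub_of_add_eq (Kbr_step (-(c:ℤ)) m), ih (m+1), ihr]
        push_cast
        rw [Finset.mul_sum, Finset.mul_sum,
          Finset.sum_range_succ' _ (m+1), Finset.sum_range_succ' _ (m+1),
          add_sub_right_comm, ← Finset.sum_sub_distrib]
        congr 1
        · refine Finset.sum_congr rfl fun t ht => ?_
          push_cast
          try simp only [Nat.add_sub_add_right]
          exact termwise c m t
        · simp only [pow_zero, Nat.cast_zero, one_mul, mul_one, qbinom_zero,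
            Nat.sub_zero, sub_zero]
          rw [← mul_assoc, ← zpow_add₀ hv]
          congr 2
          ring
    intro r
    push_cast
    rw [show (-((c:ℤ)+1)) = -(c:ℤ)-1 by ring]
    exact hmain r

/-- For integers `c > 0`, `r ≥ 0`, in `ℚ(v,K)`:
`[K;−c,r]_v = ∑_{s=0}^{r} (−1)^s v^{c(r−s)} [c+s−1 choose s]_v K^s [K;0,r−s]_v`. -/
theorem stmt4 (c r : ℕ) (hc : 0 < c) :
    Kbr (-(c : ℤ)) r =
      ∑ s ∈ Finset.range (r + 1),
        (-1 : F2) ^ s * vv ^ ((c : ℤ) * ((r : ℤ) - (s : ℤ))) *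
          qbinomF ((c : ℤ) + (s : ℤ) - 1) s * KK ^ s * Kbr 0 (r - s) :=
  main c r
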